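/- Let Z = ℤ[√5] (the ring of elements a + b√5 with a, b ∈ ℤ). Then the coprime Schinzel Hypothesis CopSch(1,1) fails for Z: there exist two nonzero polynomials P_1(t), P_2(t) ∈ Z[t], coprime in ℚ(√5)[t], such that no non-unit of Z divides all values P_1(z), P_2(z) (z ∈ Z), and yet for every m ∈ Z the elements P_1(m) and P_2(m) have a common non-unit divisor in Z. -/

import Mathlib

open Polynomial

instance : Zsqrtd.Nonsquare 5 :=
  ⟨fun n h => by
    have hn : n ≤ 2 := by nlinarith
    interval_cases n <;> omega⟩

instance : IsDomain (ℤ√(5:ℤ)) :=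
  (by norm_num : ((5:ℕ):ℤ) = 5) ▸ (inferInstance : IsDomain (ℤ√((5:ℕ):ℤ)))

/-- divisibility by 2 in ℤ√5 -/
lemma CopSchAux.dvd_two (v : ℤ√5) (h1 : 2 ∣ v.re) (h2 : 2 ∣ v.im) : (2 : ℤ√5) ∣ v := by
  refine ⟨⟨v.re / 2, v.im / 2⟩, ?_⟩
  ext <;> simp [Zsqrtd.ext_iff] <;> omega

/-- divisibility by 1+√5 in ℤ√5 -/
lemma CopSchAux.dvd_phi (v : ℤ√5) (h : 4 ∣ v.re - v.im) : (⟨1,1⟩ : ℤ√5) ∣ v := by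
  refine ⟨⟨v.im - (v.re - v.im) / 4, (v.re - v.im) / 4⟩, ?_⟩
  ext <;> simp [Zsqrtd.ext_iff, Zsqrtd.re_mul, Zsqrtd.im_mul] <;> omega

/-- divisibility by 3+√5 in ℤ√5 -/
lemma CopSchAux.dvd_psi (v : ℤ√5) (h : 4 ∣ v.re + v.im) : (⟨3,1⟩ : ℤ√5) ∣ v := by
  refine ⟨⟨(3 * v.re - 5 * v.im) / 4, (3 * v.im - v.re) / 4⟩, ?_⟩
  ext <;> simp [Zsqrtd.ext_iff, Zsqrtd.re_mul, Zsqrtd.im_mul] <;> omega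

lemma CopSchAux.nu_two : ¬ IsUnit (2 : ℤ√5) := by
  intro h
  obtain ⟨c, hc⟩ := h.exists_right_inv
  have := congrArg Zsqrtd.re hc
  simp [Zsqrtd.re_mul] at this
  omega

lemma CopSchAux.nu_phi : ¬ IsUnit (⟨1,1⟩ : ℤ√5) := by
  intro h
  obtain ⟨c, hc⟩ := h.exists_right_inv
  rw [Zsqrtd.ext_iff] at hc
  simp [Zsqrtd.re_mul, Zsqrtd.im_mul] at hc
  omega

lemma CopSchAux.nu_psi : ¬ IsUnit (⟨3,1⟩ : ℤ√5) := by
  intro h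
  obtain ⟨c, hc⟩ := h.exists_right_inv
  rw [Zsqrtd.ext_iff] at hc
  simp [Zsqrtd.re_mul, Zsqrtd.im_mul] at hc
  omega

lemma CopSchAux.unit_of_norm (a : ℤ√5) (h : a.norm = 1 ∨ a.norm = -1) : IsUnit a := by
  rcases h with h | h
  · refine IsUnit.of_mul_eq_one (a := a) (star a) ?_
    have := (Zsqrtd.norm_eq_mul_conj a).symm
    rw [h] at this
    simpa using this
  · refine IsUnit.of_mul_eq_one (a := a) (-star a) ?_
    have := (Zsqrtd.norm_eq_mul_conj a).symm
    rw [h] at this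
    rw [mul_neg, this]
    push_cast
    ring

lemma CopSchAux.no_norm_two (x y : ℤ)
    (h : x*x - 5*(y*y) = 2 ∨ x*x - 5*(y*y) = -2) : False := by
  have hc : ((x*x - 5*(y*y) : ℤ) : ZMod 5) = 2 ∨ ((x*x - 5*(y*y) : ℤ) : ZMod 5) = -2 := by
    rcases h with h | h <;> rw [h] <;> [left; right] <;> push_cast <;> ring
  push_cast at hc
  have : ∀ u v : ZMod 5, ¬ (u*u - 5*(v*v) = 2 ∨ u*u - 5*(v*v) = -2) := by decide
  exact this _ _ hc

lemma CopSchAux.parity_contra (p q : ℤ) (hnb : p*p - 5*(q*q) = 1 ∨ p*p - 5*(q*q) = -1)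
    (hpq : 2 ∣ p + q) : False := by
  have h1 : ((p*p - 5*(q*q) : ℤ) : ZMod 2) = 1 := by
    rcases hnb with h | h <;> rw [h] <;> decide
  have h2 : ((p + q : ℤ) : ZMod 2) = 0 := (ZMod.intCast_zmod_eq_zero_iff_dvd _ 2).2 hpq
  push_cast at h1 h2
  have : ∀ u v : ZMod 2, u + v = 0 → u*u - 5*(v*v) = 1 → False := by decide
  exact this _ _ h2 h1

lemma CopSchAux.norm_neg_two : Zsqrtd.norm (⟨-2,0⟩ : ℤ√5) = 4 := by simp [Zsqrtd.norm_def]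

lemma CopSchAux.four_case (a : ℤ√5) (h2 : a ∣ (⟨-2,0⟩ : ℤ√5)) (hphi : a ∣ (⟨-1,-1⟩ : ℤ√5))
    (hn : a.norm = 4 ∨ a.norm = -4) : False := by
  obtain ⟨b, hb⟩ := h2
  have hnbe : (4 : ℤ) = a.norm * b.norm := by
    rw [← CopSchAux.norm_neg_two, hb, Zsqrtd.norm_mul]
  have hnb : b.norm = 1 ∨ b.norm = -1 := by
    rcases hn with h | h <;> rw [h] at hnbe <;> omega
  obtain ⟨c, hc⟩ := hphi
  have hvb : (⟨-1,-1⟩ : ℤ√5) * b = (⟨-2,0⟩ : ℤ√5) * c := by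
    rw [hc, hb]; ring
  rw [Zsqrtd.ext_iff] at hvb
  simp [Zsqrtd.re_mul, Zsqrtd.im_mul] at hvb
  refine CopSchAux.parity_contra b.re b.im ?_ ?_
  · rw [Zsqrtd.norm_def] at hnb; rcases hnb with h|h <;> [left;right] <;> linarith
  · omega

/-- key lemma: any common divisor of -2 and -1-√5 is a unit -/
lemma CopSchAux.key (a : ℤ√5) (h2 : a ∣ (⟨-2,0⟩ : ℤ√5)) (hphi : a ∣ (⟨-1,-1⟩ : ℤ√5)) :
    IsUnit a := by
  have hn2 : a.norm ∣ 4 := by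
    obtain ⟨c, hc⟩ := h2
    exact ⟨c.norm, by rw [← CopSchAux.norm_neg_two, hc, Zsqrtd.norm_mul]⟩
  have h4 : a.norm.natAbs ∣ 4 := by
    rw [← Int.natAbs_dvd_natAbs] at hn2
    exact_mod_cast hn2
  have h5 : a.norm.natAbs = 1 ∨ a.norm.natAbs = 2 ∨ a.norm.natAbs = 4 := by
    have hle := Nat.le_of_dvd (by norm_num) h4
    have h0 : a.norm.natAbs ≠ 0 := by
      intro h; rw [h] at h4; rw [Int.natAbs_eq_zero] at h; rw [h] at hn2; norm_num at hn2
    have h3 : a.norm.natAbs ≠ 3 := by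
      intro h; rw [h] at h4; norm_num at h4
    omega
  have hnd : a.norm = a.re * a.re - 5 * (a.im * a.im) := by
    rw [Zsqrtd.norm_def]; ring
  rcases h5 with h | h | h
  · exact CopSchAux.unit_of_norm a (by omega)
  · exact (CopSchAux.no_norm_two a.re a.im (by omega)).elim
  · exact (CopSchAux.four_case a h2 hphi (by omega)).elim

noncomputable def CopSchAux.Pone : Polynomial (ℤ√5) := X^2 - C ⟨0,1⟩ * X - C 2
noncomputable def CopSchAux.Ptwo : Polynomial (ℤ√5) := X^2 - C ⟨0,1⟩ * X + C ⟨0,2⟩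

lemma CopSchAux.Psub : CopSchAux.Ptwo - CopSchAux.Pone = C ⟨2,2⟩ := by
  rw [CopSchAux.Pone, CopSchAux.Ptwo]
  ring_nf
  rw [← C_add]
  congr 1

lemma CopSchAux.Pone_eval (m : ℤ√5) :
    (CopSchAux.Pone.eval m)
      = ⟨m.re*m.re + 5*(m.im*m.im) - 5*m.im - 2, 2*(m.re*m.im) - m.re⟩ := by
  simp [CopSchAux.Pone, Zsqrtd.ext_iff, pow_two, Zsqrtd.re_mul, Zsqrtd.im_mul]
  constructor <;> ring

lemma CopSchAux.Ptwo_eval (m : ℤ√5) :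
    (CopSchAux.Ptwo.eval m)
      = ⟨m.re*m.re + 5*(m.im*m.im) - 5*m.im, 2*(m.re*m.im) - m.re + 2⟩ := by
  simp [CopSchAux.Ptwo, Zsqrtd.ext_iff, pow_two, Zsqrtd.re_mul, Zsqrtd.im_mul]
  constructor <;> ring

lemma CopSchAux.odd_vals (a b : ℤ) (ha : Odd a) :
    Odd (a*a + 5*(b*b) - 5*b - 2) ∧ Odd (2*(a*b) - a) := by
  obtain ⟨c, rfl⟩ := ha
  constructor
  · rcases Int.even_or_odd b with ⟨k, rfl⟩ | ⟨k, rfl⟩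
    · exact ⟨2*c*c+2*c+5*(k*k)*2-5*k-1, by ring⟩
    · exact ⟨2*c*c+2*c+10*(k*k)+5*k-1, by ring⟩
  · exact ⟨(2*c+1)*b - c - 1, by ring⟩

lemma CopSchAux.even_vals (a b : ℤ) (ha : Even a) :
    (2:ℤ) ∣ (a*a + 5*(b*b) - 5*b - 2) ∧ (2:ℤ) ∣ (2*(a*b) - a) := by
  obtain ⟨c, rfl⟩ := ha
  constructor
  · rcases Int.even_or_odd b with ⟨k, rfl⟩ | ⟨k, rfl⟩
    · exact ⟨2*(c*c)+10*(k*k)-5*k-1, by ring⟩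
    · exact ⟨2*(c*c)+10*(k*k)+5*k-1, by ring⟩
  · exact ⟨2*(c*b) - c, by ring⟩

theorem copschinzel_fails_Zsqrt5 :
    ∃ P₁ P₂ : Polynomial (ℤ√5), P₁ ≠ 0 ∧ P₂ ≠ 0 ∧
      (∀ d : Polynomial (FractionRing (ℤ√5)),
        d ∣ P₁.map (algebraMap (ℤ√5) (FractionRing (ℤ√5))) →
        d ∣ P₂.map (algebraMap (ℤ√5) (FractionRing (ℤ√5))) → IsUnit d) ∧
      (∀ a : ℤ√5, (∀ z : ℤ√5, a ∣ P₁.eval z ∧ a ∣ P₂.eval z) → IsUnit a) ∧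
      (∀ m : ℤ√5, ∃ d : ℤ√5, ¬ IsUnit d ∧ d ∣ P₁.eval m ∧ d ∣ P₂.eval m) := by
  refine ⟨CopSchAux.Pone, CopSchAux.Ptwo, ?_, ?_, ?_, ?_, ?_⟩
  · -- Pone ≠ 0
    intro h
    have := congrArg (eval 0) h
    simp [CopSchAux.Pone, Zsqrtd.ext_iff] at this
  · -- Ptwo ≠ 0
    intro h
    have := congrArg (eval 0) h
    simp [CopSchAux.Ptwo, Zsqrtd.ext_iff] at this
  · -- coprime over the fraction field
    intro d h1 h2
    have hd : d ∣ C (algebraMap (ℤ√5) (FractionRing (ℤ√5)) ⟨2,2⟩) := by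
      have : (CopSchAux.Ptwo - CopSchAux.Pone).map (algebraMap (ℤ√5) (FractionRing (ℤ√5)))
          = C (algebraMap (ℤ√5) (FractionRing (ℤ√5)) ⟨2,2⟩) := by
        rw [CopSchAux.Psub, map_C]
      rw [← this, Polynomial.map_sub]
      exact dvd_sub h2 h1
    refine isUnit_of_dvd_unit hd ?_
    rw [Polynomial.isUnit_C]
    have h0' : algebraMap (ℤ√5) (FractionRing (ℤ√5)) ⟨2,2⟩ ≠ 0 := by
      intro h0
      have : (⟨2,2⟩ : ℤ√5) = 0 :=
        IsFractionRing.injective (ℤ√5) (FractionRing (ℤ√5)) (by rw [map_zero]; exact h0)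
      rw [Zsqrtd.ext_iff] at this
      simp at this
    exact Ne.isUnit (G₀ := FractionRing (ℤ√5)) h0'
  · -- no fixed non-unit divisor
    intro a h
    have e0 : CopSchAux.Pone.eval 0 = (⟨-2,0⟩ : ℤ√5) := by
      rw [CopSchAux.Pone_eval]
      rw [Zsqrtd.ext_iff]
      norm_num
    have e1 : CopSchAux.Pone.eval ⟨-1,1⟩ = (⟨-1,-1⟩ : ℤ√5) := by
      rw [CopSchAux.Pone_eval]
      rw [Zsqrtd.ext_iff]
      norm_num
    exact CopSchAux.key a (e0 ▸ (h 0).1) (e1 ▸ (h ⟨-1,1⟩).1)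
  · -- for each m a common non-unit divisor
    intro m
    rcases Int.even_or_odd m.re with ha | ha
    · obtain ⟨hx, hy⟩ := CopSchAux.even_vals m.re m.im ha
      refine ⟨2, CopSchAux.nu_two, ?_, ?_⟩
      · refine CopSchAux.dvd_two _ ?_ ?_ <;> rw [CopSchAux.Pone_eval]
        · exact hx
        · exact hy
      · refine CopSchAux.dvd_two _ ?_ ?_ <;> rw [CopSchAux.Ptwo_eval] <;> dsimp only
        · obtain ⟨k, hk⟩ := hx; exact ⟨k+1, by omega⟩
        · obtain ⟨k, hk⟩ := hy; exact ⟨k+1, by omega⟩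
    · obtain ⟨hx, hy⟩ := CopSchAux.odd_vals m.re m.im ha
      obtain ⟨c, hc⟩ := hx
      obtain ⟨k, hk⟩ := hy
      have hdis : 4 ∣ (m.re*m.re + 5*(m.im*m.im) - 5*m.im - 2) - (2*(m.re*m.im) - m.re)
          ∨ 4 ∣ (m.re*m.re + 5*(m.im*m.im) - 5*m.im - 2) + (2*(m.re*m.im) - m.re) := by
        omega
      rcases hdis with hd | hd
      · refine ⟨⟨1,1⟩, CopSchAux.nu_phi, ?_, ?_⟩
        · refine CopSchAux.dvd_phi _ ?_
          rw [CopSchAux.Pone_eval]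
          exact hd
        · refine CopSchAux.dvd_phi _ ?_
          rw [CopSchAux.Ptwo_eval]
          dsimp only
          obtain ⟨w, hw⟩ := hd; exact ⟨w, by omega⟩
      · refine ⟨⟨3,1⟩, CopSchAux.nu_psi, ?_, ?_⟩
        · refine CopSchAux.dvd_psi _ ?_
          rw [CopSchAux.Pone_eval]
          exact hd
        · refine CopSchAux.dvd_psi _ ?_
          rw [CopSchAux.Ptwo_eval]
          dsimp only
          obtain ⟨w, hw⟩ := hd; exact ⟨w+1, by omega⟩
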